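/- Let v be a typical weight on 𝔻 and let λ ∈ ℂ with |λ| = 1 not be a root of unity. Consider the symbol φ(z) = λz. Then the composition operator C_φ is mean ergodic on H_v^0, and for every f ∈ H_v^0 the Cesàro means (C_φ)_[n] f converge in ‖·‖_v to the constant function f(0). -/

import Mathlib

open Metric Set Filter Complex
open scoped Topology Classical

noncomputable section

/-- Membership in the disc algebra `A(𝔻)`: continuous on the closed unit disc and
holomorphic on the open unit disc. -/
def IsDiscAlg (f : ℂ → ℂ) : Prop :=
  ContinuousOn f (closedBall (0:ℂ) 1) ∧ DifferentiableOn ℂ f (ball (0:ℂ) 1)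

/-- Membership in `H^∞(𝔻)`: bounded and holomorphic on the open unit disc. -/
def IsHInf (f : ℂ → ℂ) : Prop :=
  DifferentiableOn ℂ f (ball (0:ℂ) 1) ∧ ∃ M : ℝ, ∀ z ∈ ball (0:ℂ) 1, ‖f z‖ ≤ M

/-- The Cesàro means `(C_φ)_[n] f = (1/n) ∑_{m=1}^n f ∘ φ^m` of the composition
operator `C_φ f = f ∘ φ`. -/
def cesaro (φ f : ℂ → ℂ) (n : ℕ) (z : ℂ) : ℂ :=
  (n : ℂ)⁻¹ * ∑ m ∈ Finset.Icc 1 n, f (φ^[m] z)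

/-- `C_φ` is mean ergodic on `A(𝔻)`: for each `f ∈ A(𝔻)` the Cesàro means converge
in the sup norm on the closed disc. -/
def MeanErgodicDiscAlg (φ : ℂ → ℂ) : Prop :=
  ∀ f : ℂ → ℂ, IsDiscAlg f →
    ∃ g : ℂ → ℂ, TendstoUniformlyOn (cesaro φ f) g atTop (closedBall (0:ℂ) 1)

/-- `C_φ` is uniformly mean ergodic on `A(𝔻)`: the Cesàro means converge in operator
norm, i.e. uniformly over the unit ball of `A(𝔻)`. -/
def UnifMeanErgodicDiscAlg (φ : ℂ → ℂ) : Prop :=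
  ∃ P : (ℂ → ℂ) → ℂ → ℂ, ∀ ε > (0:ℝ), ∃ N : ℕ, ∀ n ≥ N,
    ∀ f : ℂ → ℂ, IsDiscAlg f → (∀ z ∈ closedBall (0:ℂ) 1, ‖f z‖ ≤ 1) →
      ∀ z ∈ closedBall (0:ℂ) 1, ‖cesaro φ f n z - P f z‖ ≤ ε

/-- `C_φ` is mean ergodic on `H^∞(𝔻)`: for each `f ∈ H^∞(𝔻)` the Cesàro means converge
in the sup norm on the open disc. -/
def MeanErgodicHInf (φ : ℂ → ℂ) : Prop :=
  ∀ f : ℂ → ℂ, IsHInf f →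
    ∃ g : ℂ → ℂ, TendstoUniformlyOn (cesaro φ f) g atTop (ball (0:ℂ) 1)

/-- `C_φ` is uniformly mean ergodic on `H^∞(𝔻)`: the Cesàro means converge in operator
norm, i.e. uniformly over the unit ball of `H^∞(𝔻)`. -/
def UnifMeanErgodicHInf (φ : ℂ → ℂ) : Prop :=
  ∃ P : (ℂ → ℂ) → ℂ → ℂ, ∀ ε > (0:ℝ), ∃ N : ℕ, ∀ n ≥ N,
    ∀ f : ℂ → ℂ, IsHInf f → (∀ z ∈ ball (0:ℂ) 1, ‖f z‖ ≤ 1) →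
      ∀ z ∈ ball (0:ℂ) 1, ‖cesaro φ f n z - P f z‖ ≤ ε

/-- `φ` is an automorphism (biholomorphic self-map) of the open unit disc. -/
def IsDiscAutomorphism (φ : ℂ → ℂ) : Prop :=
  DifferentiableOn ℂ φ (ball (0:ℂ) 1) ∧ MapsTo φ (ball (0:ℂ) 1) (ball (0:ℂ) 1) ∧
  ∃ ψ : ℂ → ℂ, DifferentiableOn ℂ ψ (ball (0:ℂ) 1) ∧
    MapsTo ψ (ball (0:ℂ) 1) (ball (0:ℂ) 1) ∧
    (∀ z ∈ ball (0:ℂ) 1, ψ (φ z) = z) ∧ ∀ z ∈ ball (0:ℂ) 1, φ (ψ z) = z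

/-- An elliptic automorphism of the disc: an automorphism with a fixed point in `𝔻`. -/
def IsEllipticAutomorphism (φ : ℂ → ℂ) : Prop :=
  IsDiscAutomorphism φ ∧ ∃ z ∈ ball (0:ℂ) 1, φ z = z

/-- A hyperbolic automorphism of the disc: an automorphism with exactly two fixed
points, both on the unit circle. -/
def IsHyperbolicAutomorphism (φ : ℂ → ℂ) : Prop :=
  IsDiscAutomorphism φ ∧ ∃ p q : ℂ, p ≠ q ∧ ‖p‖ = 1 ∧ ‖q‖ = 1 ∧ φ p = p ∧ φ q = q ∧
    ∀ z ∈ closedBall (0:ℂ) 1, φ z = z → z = p ∨ z = q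

/-- A parabolic automorphism of the disc: an automorphism with exactly one fixed
point, lying on the unit circle. -/
def IsParabolicAutomorphism (φ : ℂ → ℂ) : Prop :=
  IsDiscAutomorphism φ ∧ ∃ p : ℂ, ‖p‖ = 1 ∧ φ p = p ∧
    ∀ z ∈ closedBall (0:ℂ) 1, φ z = z → z = p

/-- A set `J ⊆ ℕ` has density one: `#(J ∩ [0,N]) / N → 1` as `N → ∞`. -/
def HasDensityOne (J : Set ℕ) : Prop :=
  Tendsto (fun N : ℕ => (((Finset.range (N + 1)).filter (fun n => n ∈ J)).card : ℝ) / N)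
    atTop (𝓝 1)

/-- A typical weight on `𝔻`: continuous, strictly positive, bounded, radial,
non-increasing in `|z|`, and tending to `0` as `|z| → 1`. -/
def IsTypicalWeight (v : ℂ → ℝ) : Prop :=
  ContinuousOn v (ball (0:ℂ) 1) ∧ (∀ z ∈ ball (0:ℂ) 1, 0 < v z) ∧
  (∃ M : ℝ, ∀ z ∈ ball (0:ℂ) 1, v z ≤ M) ∧
  (∀ z ∈ ball (0:ℂ) 1, ∀ w ∈ ball (0:ℂ) 1, ‖z‖ = ‖w‖ → v z = v w) ∧
  (∀ z ∈ ball (0:ℂ) 1, ∀ w ∈ ball (0:ℂ) 1, ‖z‖ ≤ ‖w‖ → v w ≤ v z) ∧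
  (∀ ε > (0:ℝ), ∃ r : ℝ, r < 1 ∧ ∀ z ∈ ball (0:ℂ) 1, r ≤ ‖z‖ → v z < ε)

/-- Membership in the weighted space `H_v^∞`. -/
def IsHvInf (v : ℂ → ℝ) (f : ℂ → ℂ) : Prop :=
  DifferentiableOn ℂ f (ball (0:ℂ) 1) ∧ ∃ M : ℝ, ∀ z ∈ ball (0:ℂ) 1, v z * ‖f z‖ ≤ M

/-- Membership in the weighted space `H_v^0`. -/
def IsHv0 (v : ℂ → ℝ) (f : ℂ → ℂ) : Prop :=
  IsHvInf v f ∧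
  ∀ ε > (0:ℝ), ∃ r : ℝ, r < 1 ∧ ∀ z ∈ ball (0:ℂ) 1, r ≤ ‖z‖ → v z * ‖f z‖ < ε

lemma iter_rot (lam z : ℂ) (m : ℕ) : (fun w => lam * w)^[m] z = lam ^ m * z := by
  induction m with
  | zero => simp
  | succ k ih => rw [Function.iterate_succ_apply', ih, pow_succ]; ring

lemma geom_bound (x : ℂ) (hx1 : ‖x‖ = 1) (hx : x ≠ 1) (n : ℕ) :
    ‖∑ m ∈ Finset.Icc 1 n, x ^ m‖ ≤ 2 / ‖x - 1‖ + 1 := by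
  have hd : 0 < ‖x - 1‖ := by
    rw [norm_pos_iff]
    exact sub_ne_zero.2 hx
  have h1 : Finset.Icc 1 n = Finset.Ico 1 (n + 1) := by
    rw [Nat.Icc_eq_range', Nat.Ico_eq_range']
  rw [h1, Finset.sum_Ico_eq_sub _ (Nat.le_add_left 1 n), geom_sum_eq hx (n+1)]
  calc ‖(x ^ (n+1) - 1) / (x - 1) - ∑ m ∈ Finset.range 1, x ^ m‖
      ≤ ‖(x ^ (n+1) - 1) / (x - 1)‖ + ‖∑ m ∈ Finset.range 1, x ^ m‖ := norm_sub_le _ _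
    _ ≤ 2 / ‖x - 1‖ + 1 := by
        have h2 : ‖∑ m ∈ Finset.range 1, x ^ m‖ = 1 := by simp
        have h3 : ‖(x ^ (n+1) - 1) / (x - 1)‖ ≤ 2 / ‖x - 1‖ := by
          rw [norm_div]
          gcongr
          exact (norm_sub_le _ _).trans (by simp [norm_pow, hx1]; norm_num)
        rw [h2]
        exact add_le_add h3 le_rfl

set_option maxHeartbeats 1000000 in
lemma key_interior (f : ℂ → ℂ) (hf : DifferentiableOn ℂ f (ball (0:ℂ) 1))
    (lam : ℂ) (hlam : ‖lam‖ = 1) (hnotroot : ∀ j : ℕ, 0 < j → lam ^ j ≠ 1)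
    (r : ℝ) (hr0 : 0 ≤ r) (hr1 : r < 1) (ε : ℝ) (hε : 0 < ε) :
    ∃ N : ℕ, 1 ≤ N ∧ ∀ n ≥ N, ∀ z : ℂ, ‖z‖ ≤ r →
      ‖cesaro (fun w => lam * w) f n z - f 0‖ ≤ ε := by
  classical
  set s : ℝ := (r + 1) / 2 with hs
  have hrs : r < s := by rw [hs]; linarith
  have hs0 : 0 < s := by rw [hs]; linarith
  have hs1 : s < 1 := by rw [hs]; linarith
  set t : NNReal := s.toNNReal with ht
  have hts : (t : ℝ) = s := Real.coe_toNNReal s hs0.le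
  have ht0 : 0 < t := Real.toNNReal_pos.2 hs0
  have hsub : closedBall (0:ℂ) (t : ℝ) ⊆ ball (0:ℂ) 1 := by
    rw [hts]; exact closedBall_subset_ball hs1
  obtain ⟨p, hp⟩ : ∃ p : FormalMultilinearSeries ℂ ℂ ℂ, HasFPowerSeriesOnBall f p 0 t :=
    ⟨_, (hf.mono hsub).hasFPowerSeriesOnBall ht0⟩
  set a : ℕ → ℂ := fun k => p.coeff k with ha
  have hval : ∀ w : ℂ, ‖w‖ ≤ r → HasSum (fun k => a k * w ^ k) (f w) := by
    intro w hw
    have hw' : w ∈ Metric.eball (0:ℂ) (t : ENNReal) := by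
      rw [Metric.emetric_ball_nnreal, mem_ball_zero_iff, hts]
      exact lt_of_le_of_lt hw hrs
    have h1 := hp.hasSum hw'
    rw [zero_add] at h1
    have h2 : (fun k => p k fun _ => w) = fun k => a k * w ^ k := by
      funext k
      rw [p.apply_eq_pow_smul_coeff, smul_eq_mul, ha]
      ring
    rwa [h2] at h1
  have hf0 : a 0 = f 0 := by
    rw [ha]
    exact hp.coeff_zero 1
  have hrt : ((r.toNNReal : NNReal) : ENNReal) < p.radius := by
    refine lt_of_lt_of_le ?_ hp.r_le
    rw [ENNReal.coe_lt_coe]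
    rw [← NNReal.coe_lt_coe, hts, Real.coe_toNNReal r hr0]
    exact hrs
  have hg : Summable (fun k => ‖a k‖ * r ^ k) := by
    have := p.summable_norm_mul_pow hrt
    simpa [ha, FormalMultilinearSeries.norm_apply_eq_norm_coef,
      Real.coe_toNNReal r hr0] using this
  -- choose K with the tail small
  have htail : Tendsto (fun i => ∑' k, ‖a (k + i)‖ * r ^ (k + i)) atTop (𝓝 0) :=
    tendsto_sum_nat_add (fun k => ‖a k‖ * r ^ k)
  have h3 : (0:ℝ) < ε / 3 := by linarith
  obtain ⟨K0, hK0⟩ := Filter.eventually_atTop.1 (htail.eventually (gt_mem_nhds h3))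
  set K : ℕ := K0 with hKdef
  set tail : ℝ := ∑' k, ‖a (k + (K + 2))‖ * r ^ (k + (K + 2)) with htaildef
  have htail3 : tail ≤ ε / 3 := (hK0 (K + 2) (by omega)).le
  -- δ
  have hne : (Finset.Icc 1 (K+1)).Nonempty := ⟨1, by simp⟩
  set δ : ℝ := (Finset.Icc 1 (K+1)).inf' hne (fun k => ‖lam ^ k - 1‖) with hδ
  have hδpos : 0 < δ := by
    rw [hδ, Finset.lt_inf'_iff]
    intro k hk
    rw [norm_pos_iff]
    exact sub_ne_zero.2 (hnotroot k (Finset.mem_Icc.1 hk).1)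
  have hδle : ∀ k ∈ Finset.Icc 1 (K+1), δ ≤ ‖lam ^ k - 1‖ :=
    fun k hk => Finset.inf'_le _ hk
  set C : ℝ := (∑ i ∈ Finset.range (K+1), ‖a (i+1)‖ * r ^ (i+1)) * (2/δ + 1) with hCdef
  have hC0 : 0 ≤ C := by
    apply mul_nonneg
    · exact Finset.sum_nonneg fun i _ => by positivity
    · positivity
  obtain ⟨N0, hN0⟩ := exists_nat_gt (3 * C / ε)
  have hCn : ∀ n : ℕ, N0 ≤ n → C / n ≤ ε / 3 := by
    intro n h1
    have hn' : 3 * C / ε < (n:ℝ) := lt_of_lt_of_le hN0 (by exact_mod_cast h1)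
    have hnpos : (0:ℝ) < n := lt_of_le_of_lt (div_nonneg (by linarith) hε.le) hn'
    rw [div_lt_iff₀ hε] at hn'
    rw [div_le_iff₀ hnpos]
    nlinarith
  refine ⟨max N0 1, le_max_right _ _, ?_⟩
  intro n hn z hz
  have hn1 : 1 ≤ n := le_trans (le_max_right N0 1) hn
  have hnN0 : N0 ≤ n := le_trans (le_max_left _ _) hn
  have hnC : (n:ℂ) ≠ 0 := Nat.cast_ne_zero.2 (by omega)
  have hnR : (0:ℝ) < n := by exact_mod_cast hn1
  set P : ℂ → ℂ := fun w => ∑ k ∈ Finset.range (K+2), a k * w ^ k with hP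
  set T : ℂ → ℂ := fun w => f w - P w with hT
  have hzr : ∀ m : ℕ, ‖lam ^ m * z‖ ≤ r := by
    intro m
    rw [norm_mul, norm_pow, hlam, one_pow, one_mul]
    exact hz
  have hTbound : ∀ w : ℂ, ‖w‖ ≤ r → ‖T w‖ ≤ tail := by
    intro w hw
    have h1 := hval w hw
    have h2 : HasSum (fun k => a (k + (K+2)) * w ^ (k + (K+2))) (T w) := by
      rw [hT]
      exact (hasSum_nat_add_iff' (K+2)).2 h1
    have hterm : ∀ k, ‖a (k + (K+2)) * w ^ (k + (K+2))‖ ≤ ‖a (k + (K+2))‖ * r ^ (k + (K+2)) := by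
      intro k
      rw [norm_mul, norm_pow]
      gcongr
    have hs2 : Summable (fun k => ‖a (k + (K+2))‖ * r ^ (k + (K+2))) :=
      (summable_nat_add_iff (K+2)).2 hg
    have hsnorm : Summable (fun k => ‖a (k + (K+2)) * w ^ (k + (K+2))‖) :=
      Summable.of_nonneg_of_le (fun k => norm_nonneg _) hterm hs2
    calc ‖T w‖ = ‖∑' k, a (k + (K+2)) * w ^ (k + (K+2))‖ := by rw [h2.tsum_eq]
      _ ≤ ∑' k, ‖a (k + (K+2)) * w ^ (k + (K+2))‖ := norm_tsum_le_tsum_norm hsnorm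
      _ ≤ tail := Summable.tsum_le_tsum hterm hsnorm hs2
  set c : ℕ → ℂ := fun k => (n:ℂ)⁻¹ * ∑ m ∈ Finset.Icc 1 n, (lam ^ k) ^ m with hcdef
  have hsplit : cesaro (fun w => lam * w) f n z
      = (∑ k ∈ Finset.range (K+2), a k * z ^ k * c k)
        + (n:ℂ)⁻¹ * ∑ m ∈ Finset.Icc 1 n, T (lam ^ m * z) := by
    have hfm : ∀ m : ℕ, f (lam ^ m * z)
        = (∑ k ∈ Finset.range (K+2), a k * (lam ^ m * z) ^ k) + T (lam ^ m * z) := by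
      intro m; rw [hT]; simp [hP]
    simp only [cesaro, iter_rot]
    rw [Finset.sum_congr rfl fun m _ => hfm m, Finset.sum_add_distrib, mul_add]
    congr 1
    rw [Finset.sum_comm, Finset.mul_sum]
    refine Finset.sum_congr rfl fun k _ => ?_
    have hpow : ∀ m : ℕ, a k * (lam ^ m * z) ^ k = a k * z ^ k * (lam ^ k) ^ m := by
      intro m
      rw [mul_pow, ← pow_mul, Nat.mul_comm, pow_mul]
      ring
    rw [Finset.sum_congr rfl fun m _ => hpow m, ← Finset.mul_sum, hcdef]
    ring
  have hc0 : c 0 = 1 := by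
    rw [hcdef]
    simp only [pow_zero, one_pow, Finset.sum_const, Nat.card_Icc, Nat.add_sub_cancel,
      nsmul_eq_mul, mul_one]
    exact inv_mul_cancel₀ hnC
  have hpeel : ∑ k ∈ Finset.range (K+2), a k * z ^ k * c k
      = (∑ i ∈ Finset.range (K+1), a (i+1) * z ^ (i+1) * c (i+1)) + a 0 := by
    rw [Finset.sum_range_succ']
    simp [hc0]
  have hcb : ∀ i ∈ Finset.range (K+1), ‖c (i+1)‖ ≤ (2/δ + 1) / n := by
    intro i hi
    have hk1 : i + 1 ∈ Finset.Icc 1 (K+1) := by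
      rw [Finset.mem_Icc]
      exact ⟨by omega, by have := Finset.mem_range.1 hi; omega⟩
    have hx1 : ‖lam ^ (i+1)‖ = 1 := by rw [norm_pow, hlam, one_pow]
    have hxne : lam ^ (i+1) ≠ 1 := hnotroot _ (Nat.succ_pos i)
    have hgb := geom_bound (lam ^ (i+1)) hx1 hxne n
    calc ‖c (i+1)‖ = (n:ℝ)⁻¹ * ‖∑ m ∈ Finset.Icc 1 n, (lam ^ (i+1)) ^ m‖ := by
          rw [hcdef, norm_mul, norm_inv, Complex.norm_natCast]
      _ ≤ (n:ℝ)⁻¹ * (2 / ‖lam ^ (i+1) - 1‖ + 1) := by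
          gcongr
      _ ≤ (n:ℝ)⁻¹ * (2 / δ + 1) := by
          gcongr
          exact hδle _ hk1
      _ = (2/δ + 1) / n := by ring
  have hterm1 : ‖∑ i ∈ Finset.range (K+1), a (i+1) * z ^ (i+1) * c (i+1)‖ ≤ ε / 3 := by
    calc ‖∑ i ∈ Finset.range (K+1), a (i+1) * z ^ (i+1) * c (i+1)‖
        ≤ ∑ i ∈ Finset.range (K+1), ‖a (i+1) * z ^ (i+1) * c (i+1)‖ := norm_sum_le _ _
      _ ≤ ∑ i ∈ Finset.range (K+1), ‖a (i+1)‖ * r ^ (i+1) * ((2/δ + 1) / n) := by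
          refine Finset.sum_le_sum fun i hi => ?_
          rw [norm_mul, norm_mul, norm_pow]
          gcongr
          exact hcb i hi
      _ = C / n := by rw [hCdef, ← Finset.sum_mul]; ring
      _ ≤ ε / 3 := hCn n hnN0
  have hterm2 : ‖(n:ℂ)⁻¹ * ∑ m ∈ Finset.Icc 1 n, T (lam ^ m * z)‖ ≤ ε / 3 := by
    have htail0 : 0 ≤ tail := le_trans (norm_nonneg _) (hTbound z hz)
    calc ‖(n:ℂ)⁻¹ * ∑ m ∈ Finset.Icc 1 n, T (lam ^ m * z)‖
        = (n:ℝ)⁻¹ * ‖∑ m ∈ Finset.Icc 1 n, T (lam ^ m * z)‖ := by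
          rw [norm_mul, norm_inv, Complex.norm_natCast]
      _ ≤ (n:ℝ)⁻¹ * ∑ m ∈ Finset.Icc 1 n, ‖T (lam ^ m * z)‖ := by
          gcongr
          exact norm_sum_le _ _
      _ ≤ (n:ℝ)⁻¹ * ∑ m ∈ Finset.Icc 1 n, tail := by
          gcongr with m hm
          exact hTbound _ (hzr m)
      _ = (n:ℝ)⁻¹ * (n * tail) := by
          rw [Finset.sum_const, Nat.card_Icc, Nat.add_sub_cancel, nsmul_eq_mul]
      _ = tail := by field_simp
      _ ≤ ε / 3 := htail3
  have hdiff : cesaro (fun w => lam * w) f n z - f 0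
      = (∑ i ∈ Finset.range (K+1), a (i+1) * z ^ (i+1) * c (i+1))
        + (n:ℂ)⁻¹ * ∑ m ∈ Finset.Icc 1 n, T (lam ^ m * z) := by
    rw [hsplit, hpeel, hf0]
    ring
  rw [hdiff]
  calc ‖_ + _‖ ≤ _ + _ := norm_add_le _ _
    _ ≤ ε / 3 + ε / 3 := add_le_add hterm1 hterm2
    _ ≤ ε := by linarith

/-- **Rotation symbol on `H_v^0`, irrational case.** Let `v` be a typical weight and `λ` with
`|λ| = 1` not a root of unity. Then for `φ(z) = λz` the composition operator `C_φ` is mean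
ergodic on `H_v^0`: for every `f ∈ H_v^0` its Cesàro means converge in `‖·‖_v` to the
constant function `f(0)`. -/
theorem stmt_18 (v : ℂ → ℝ) (hv : IsTypicalWeight v)
    (lam : ℂ) (hlam : ‖lam‖ = 1) (hnotroot : ∀ j : ℕ, 0 < j → lam ^ j ≠ 1) :
    ∀ f : ℂ → ℂ, IsHv0 v f → ∀ ε > (0:ℝ), ∃ N : ℕ, ∀ n ≥ N, ∀ z ∈ ball (0:ℂ) 1,
      v z * ‖cesaro (fun w => lam * w) f n z - f 0‖ ≤ ε := by
  obtain ⟨hvc, hvpos, ⟨M, hM⟩, hrad, hmono, hvan⟩ := hv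
  intro f hf ε hε
  obtain ⟨⟨hdf, -⟩, hsmall⟩ := hf
  have h0mem : (0:ℂ) ∈ ball (0:ℂ) 1 := by simp
  have hMpos : 0 < M := lt_of_lt_of_le (hvpos 0 h0mem) (hM 0 h0mem)
  obtain ⟨r₁, hr₁lt, hr₁⟩ := hsmall (ε/3) (by linarith)
  set b : ℝ := ‖f 0‖ with hb
  have hb0 : 0 ≤ b := norm_nonneg _
  obtain ⟨r₂, hr₂lt, hr₂⟩ := hvan (ε/(3*(b+1))) (by positivity)
  set r : ℝ := max 0 (max r₁ r₂) with hrdef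
  have hr0 : 0 ≤ r := le_max_left _ _
  have hr1 : r < 1 := by
    rw [hrdef]
    exact max_lt one_pos (max_lt hr₁lt hr₂lt)
  obtain ⟨N₀, hN₀1, hN₀⟩ :=
    key_interior f hdf lam hlam hnotroot r hr0 hr1 (ε/(M+1)) (by positivity)
  refine ⟨N₀, ?_⟩
  intro n hn z hz
  have hn1 : 1 ≤ n := le_trans hN₀1 hn
  have hvz0 : 0 ≤ v z := (hvpos z hz).le
  by_cases hcase : ‖z‖ ≤ r
  · calc v z * ‖cesaro (fun w => lam * w) f n z - f 0‖
        ≤ M * (ε/(M+1)) :=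
          mul_le_mul (hM z hz) (hN₀ n hn z hcase) (norm_nonneg _) hMpos.le
      _ ≤ (M+1) * (ε/(M+1)) := by gcongr <;> linarith
      _ = ε := by field_simp
  · push_neg at hcase
    have hzr1 : r₁ ≤ ‖z‖ :=
      le_trans ((le_max_left r₁ r₂).trans (le_max_right 0 _)) hcase.le
    have hzr2 : r₂ ≤ ‖z‖ :=
      le_trans ((le_max_right r₁ r₂).trans (le_max_right 0 _)) hcase.le
    have hnormz : ∀ m : ℕ, ‖lam ^ m * z‖ = ‖z‖ := by
      intro m; rw [norm_mul, norm_pow, hlam, one_pow, one_mul]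
    have hmem : ∀ m : ℕ, lam ^ m * z ∈ ball (0:ℂ) 1 := by
      intro m
      rw [mem_ball_zero_iff, hnormz m]
      exact mem_ball_zero_iff.1 hz
    have hfm : ∀ m : ℕ, v z * ‖f (lam ^ m * z)‖ ≤ ε/3 := by
      intro m
      have h1 := hr₁ (lam ^ m * z) (hmem m) (by rw [hnormz m]; exact hzr1)
      rw [hrad z hz (lam ^ m * z) (hmem m) (hnormz m).symm]
      exact h1.le
    have hnR : (0:ℝ) < n := by exact_mod_cast hn1
    have hces : v z * ‖cesaro (fun w => lam * w) f n z‖ ≤ ε/3 := by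
      calc v z * ‖cesaro (fun w => lam * w) f n z‖
          = v z * ((n:ℝ)⁻¹ * ‖∑ m ∈ Finset.Icc 1 n, f (lam ^ m * z)‖) := by
            simp only [cesaro, iter_rot]
            rw [norm_mul, norm_inv, Complex.norm_natCast]
        _ ≤ v z * ((n:ℝ)⁻¹ * ∑ m ∈ Finset.Icc 1 n, ‖f (lam ^ m * z)‖) := by
            gcongr
            exact norm_sum_le _ _
        _ = (n:ℝ)⁻¹ * ∑ m ∈ Finset.Icc 1 n, v z * ‖f (lam ^ m * z)‖ := by
            rw [Finset.mul_sum, Finset.mul_sum]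
            rw [Finset.mul_sum]
            refine Eq.trans ?_ rfl
            rw [← Finset.mul_sum, ← Finset.mul_sum]
            ring_nf
            rw [Finset.mul_sum]
        _ ≤ (n:ℝ)⁻¹ * ∑ m ∈ Finset.Icc 1 n, (ε/3) := by
            gcongr with m hm
            exact hfm m
        _ = (n:ℝ)⁻¹ * (n * (ε/3)) := by
            rw [Finset.sum_const, Nat.card_Icc, Nat.add_sub_cancel, nsmul_eq_mul]
        _ = ε/3 := by field_simp
    have hf0b : v z * b ≤ ε/3 := by
      have h2 := hr₂ z hz hzr2
      calc v z * b ≤ (ε/(3*(b+1))) * b :=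
            mul_le_mul_of_nonneg_right h2.le hb0
        _ ≤ (ε/(3*(b+1))) * (b+1) := by
            gcongr
            linarith
        _ = ε/3 := by field_simp
    calc v z * ‖cesaro (fun w => lam * w) f n z - f 0‖
        ≤ v z * (‖cesaro (fun w => lam * w) f n z‖ + ‖f 0‖) := by
          gcongr
          exact norm_sub_le _ _
      _ = v z * ‖cesaro (fun w => lam * w) f n z‖ + v z * b := by rw [mul_add, hb]
      _ ≤ ε/3 + ε/3 := add_le_add hces hf0b
      _ ≤ ε := by linarith
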